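/- Let P be a symmetric positive definite real n×n matrix and B an arbitrary real n×n matrix. Then the improper integral X = ∫₀^∞ e^{−tP} B e^{−tP} dt converges, and X is the unique real n×n matrix satisfying the Lyapunov equation PX + XP = B. -/

import Mathlib

open Matrix MeasureTheory

lemma exp_decay_integral_aux {c : ℝ} (hc : 0 < c) :
    (∫ t in Set.Ioi (0 : ℝ), Real.exp (-((c : ℝ) * t))) = 1 / c := by
  have hderiv : ∀ t ∈ Set.Ioi (0 : ℝ),
      HasDerivAt (fun t : ℝ => -Real.exp (-(c * t)) / c) (Real.exp (-(c * t))) t := by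
    intro t _
    have h1 : HasDerivAt (fun t : ℝ => -(c * t)) (-c) t := by
      simpa using (hasDerivAt_id t).const_mul (-c)
    have h3 := (h1.exp.neg).div_const c
    exact h3.congr_deriv (by rw [div_eq_iff hc.ne']; ring)
  have hint : IntegrableOn (fun t : ℝ => Real.exp (-(c * t))) (Set.Ioi 0) := by
    have h0 : IntegrableOn (fun t : ℝ => Real.exp (-c * t)) (Set.Ioi (0 : ℝ)) :=
      exp_neg_integrableOn_Ioi 0 hc
    exact h0.congr_fun (fun t _ => by simp only [neg_mul]) measurableSet_Ioi
  have htend : Filter.Tendsto (fun t : ℝ => -Real.exp (-(c * t)) / c)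
      Filter.atTop (nhds 0) := by
    have hct : Filter.Tendsto (fun t : ℝ => c * t) Filter.atTop Filter.atTop :=
      Filter.Tendsto.const_mul_atTop hc Filter.tendsto_id
    have h4 := Real.tendsto_exp_neg_atTop_nhds_zero.comp hct
    have := (h4.neg).div_const c
    simpa using this
  have hcont : ContinuousWithinAt (fun t : ℝ => -Real.exp (-(c * t)) / c)
      (Set.Ici 0) 0 := by
    apply Continuous.continuousWithinAt
    continuity
  have h := integral_Ioi_of_hasDerivAt_of_tendsto hcont hderiv hint htend
  rw [h]
  simp [neg_div]

set_option maxHeartbeats 1000000 in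
theorem lyapunov_integral_solution (n : ℕ) (P B : Matrix (Fin n) (Fin n) ℝ)
    (hP : P.PosDef) :
    (∀ i j : Fin n, IntegrableOn
      (fun t : ℝ =>
        (NormedSpace.exp ((-t) • P) * B * NormedSpace.exp ((-t) • P)) i j)
      (Set.Ioi (0 : ℝ))) ∧
    P * (Matrix.of fun i j : Fin n => ∫ t in Set.Ioi (0 : ℝ),
        (NormedSpace.exp ((-t) • P) * B * NormedSpace.exp ((-t) • P)) i j) +
      (Matrix.of fun i j : Fin n => ∫ t in Set.Ioi (0 : ℝ),
        (NormedSpace.exp ((-t) • P) * B * NormedSpace.exp ((-t) • P)) i j) * P = B ∧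
    (∀ Y : Matrix (Fin n) (Fin n) ℝ, P * Y + Y * P = B →
      Y = Matrix.of fun i j : Fin n => ∫ t in Set.Ioi (0 : ℝ),
        (NormedSpace.exp ((-t) • P) * B * NormedSpace.exp ((-t) • P)) i j) := by
  classical
  have hH : P.IsHermitian := hP.1
  set U : Matrix (Fin n) (Fin n) ℝ := (hH.eigenvectorUnitary : Matrix (Fin n) (Fin n) ℝ)
    with hUdef
  set lam : Fin n → ℝ := hH.eigenvalues with hlamdef
  have hlam : ∀ k, 0 < lam k := hP.eigenvalues_pos
  have hlamsum : ∀ p q, 0 < lam p + lam q := fun p q => add_pos (hlam p) (hlam q)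
  have hUUs : U * star U = 1 :=
    mem_unitaryGroup_iff.mp hH.eigenvectorUnitary.2
  have hsUU : star U * U = 1 :=
    mem_unitaryGroup_iff'.mp hH.eigenvectorUnitary.2
  have hofReal : (RCLike.ofReal ∘ lam : Fin n → ℝ) = lam := by
    funext k; simp [RCLike.ofReal]
  have hspec : P = U * diagonal lam * star U := by
    conv_lhs => rw [hH.spectral_theorem]
    rw [hofReal, Unitary.conjStarAlgAut_apply]
  have hdiag : star U * P * U = diagonal lam := by
    rw [hspec]
    simp only [Matrix.mul_assoc, hsUU, Matrix.mul_one]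
    rw [← Matrix.mul_assoc, hsUU, Matrix.one_mul]
  -- unit version of U
  let Uu : (Matrix (Fin n) (Fin n) ℝ)ˣ :=
    { val := U, inv := star U, val_inv := hUUs, inv_val := hsUU }
  -- the key spectral formula for the exponential
  have key : ∀ t : ℝ, NormedSpace.exp ((-t) • P) =
      U * diagonal (fun k => Real.exp (-t * lam k)) * star U := by
    intro t
    have hdsm : diagonal (fun k => -t * lam k) = (-t) • diagonal lam := by
      rw [← Matrix.diagonal_smul]
      congr 1
    have h1 : (-t) • P = (Uu : Matrix (Fin n) (Fin n) ℝ) *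
        diagonal (fun k => -t * lam k) * ((↑(Uu⁻¹) : Matrix (Fin n) (Fin n) ℝ)) := by
      show (-t) • P = U * diagonal (fun k => -t * lam k) * star U
      rw [hspec, hdsm, Matrix.mul_smul, Matrix.smul_mul]
    have hexp : (NormedSpace.exp (fun k => -t * lam k) : Fin n → ℝ) =
        fun k => Real.exp (-t * lam k) := by
      funext k
      rw [Pi.exp_def, ← Real.exp_eq_exp_ℝ]
    rw [h1, Matrix.exp_units_conj, Matrix.exp_diagonal]
    show U * diagonal (NormedSpace.exp (fun k => -t * lam k)) * star U = _
    rw [hexp]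
  set B' : Matrix (Fin n) (Fin n) ℝ := star U * B * U with hB'def
  -- entrywise formula for the integrand
  have hentry : ∀ (t : ℝ) (i j : Fin n),
      (NormedSpace.exp ((-t) • P) * B * NormedSpace.exp ((-t) • P)) i j =
      ∑ p : Fin n, ∑ q : Fin n,
        (U i p * B' p q * U j q) * Real.exp (-((lam p + lam q) * t)) := by
    intro t i j
    have hN : diagonal (fun k => Real.exp (-t * lam k)) * B' *
        diagonal (fun k => Real.exp (-t * lam k)) =
        Matrix.of (fun p q => Real.exp (-t * lam p) * B' p q * Real.exp (-t * lam q)) := by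
      ext p q
      simp [Matrix.mul_diagonal, Matrix.diagonal_mul]
    have hmat : NormedSpace.exp ((-t) • P) * B * NormedSpace.exp ((-t) • P) =
        U * Matrix.of (fun p q => Real.exp (-t * lam p) * B' p q * Real.exp (-t * lam q))
          * star U := by
      rw [← hN, key t, hB'def]
      simp only [Matrix.mul_assoc, Matrix.mul_one, hUUs, hsUU]
    rw [hmat]
    simp only [Matrix.mul_apply, Matrix.of_apply, Matrix.star_apply, star_trivial,
      Finset.sum_mul]
    rw [Finset.sum_comm]
    apply Finset.sum_congr rfl
    intro p _
    apply Finset.sum_congr rfl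
    intro q _
    have hexp : Real.exp (-((lam p + lam q) * t)) =
        Real.exp (-(t * lam p)) * Real.exp (-(t * lam q)) := by
      rw [← Real.exp_add]; ring_nf
    rw [hexp]
    ring_nf
  -- per-term integrability
  have hIpq : ∀ (c : ℝ) (p q : Fin n), IntegrableOn
      (fun t : ℝ => c * Real.exp (-((lam p + lam q) * t))) (Set.Ioi (0 : ℝ)) := by
    intro c p q
    have h0 : IntegrableOn (fun t : ℝ => c * Real.exp (-(lam p + lam q) * t))
        (Set.Ioi (0 : ℝ)) :=
      (exp_neg_integrableOn_Ioi (0 : ℝ) (hlamsum p q)).const_mul c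
    exact h0.congr_fun (fun t _ => by simp only [neg_mul]) measurableSet_Ioi
  -- integrability
  have hint : ∀ i j : Fin n, IntegrableOn
      (fun t : ℝ =>
        (NormedSpace.exp ((-t) • P) * B * NormedSpace.exp ((-t) • P)) i j)
      (Set.Ioi (0 : ℝ)) := by
    intro i j
    have : IntegrableOn
        (fun t : ℝ => ∑ p : Fin n, ∑ q : Fin n,
          (U i p * B' p q * U j q) * Real.exp (-((lam p + lam q) * t)))
        (Set.Ioi (0 : ℝ)) := by
      apply integrable_finset_sum
      intro p _
      apply integrable_finset_sum
      intro q _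
      exact hIpq _ p q
    exact this.congr_fun (fun t _ => (hentry t i j).symm) measurableSet_Ioi
  refine ⟨hint, ?_⟩
  -- value of the integral
  set M : Matrix (Fin n) (Fin n) ℝ :=
    Matrix.of (fun p q => B' p q / (lam p + lam q)) with hMdef
  have hXval : (Matrix.of fun i j : Fin n => ∫ t in Set.Ioi (0 : ℝ),
      (NormedSpace.exp ((-t) • P) * B * NormedSpace.exp ((-t) • P)) i j) =
      U * M * star U := by
    ext i j
    show (∫ t in Set.Ioi (0 : ℝ),
      (NormedSpace.exp ((-t) • P) * B * NormedSpace.exp ((-t) • P)) i j) =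
      (U * M * star U) i j
    rw [setIntegral_congr_fun measurableSet_Ioi (fun t _ => hentry t i j)]
    rw [integral_finset_sum _ (fun p _ => integrable_finset_sum _ (fun q _ => hIpq _ p q))]
    have hterm : ∀ p : Fin n, (∫ t in Set.Ioi (0 : ℝ), ∑ q : Fin n,
        (U i p * B' p q * U j q) * Real.exp (-((lam p + lam q) * t))) =
        ∑ q : Fin n, (U i p * B' p q * U j q) / (lam p + lam q) := by
      intro p
      rw [integral_finset_sum _ (fun q _ => hIpq _ p q)]
      apply Finset.sum_congr rfl
      intro q _
      rw [MeasureTheory.integral_const_mul, exp_decay_integral_aux (hlamsum p q)]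
      ring
    rw [Finset.sum_congr rfl (fun p _ => hterm p)]
    simp only [Matrix.mul_apply, hMdef, Matrix.of_apply, Matrix.star_apply, star_trivial]
    rw [Finset.sum_comm]
    apply Finset.sum_congr rfl
    intro q _
    rw [Finset.sum_mul]
    apply Finset.sum_congr rfl
    intro p _
    have hne : lam p + lam q ≠ 0 := (hlamsum p q).ne'
    field_simp
  rw [hXval]
  -- the algebraic identity
  have hDM : diagonal lam * M + M * diagonal lam = B' := by
    ext p q
    have hne : lam p + lam q ≠ 0 := (hlamsum p q).ne'
    simp only [Matrix.add_apply, Matrix.diagonal_mul, Matrix.mul_diagonal, hMdef,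
      Matrix.of_apply]
    field_simp
  have hsolve : P * (U * M * star U) + (U * M * star U) * P = B := by
    rw [hspec]
    calc U * diagonal lam * star U * (U * M * star U) +
          U * M * star U * (U * diagonal lam * star U)
        = U * (diagonal lam * (star U * U) * M) * star U +
          U * (M * (star U * U) * diagonal lam) * star U := by
          simp only [Matrix.mul_assoc]
      _ = U * (diagonal lam * M + M * diagonal lam) * star U := by
          rw [hsUU]
          simp only [Matrix.mul_one, Matrix.one_mul, Matrix.mul_add, Matrix.add_mul]
      _ = U * B' * star U := by rw [hDM]
      _ = B := by
          rw [hB'def]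
          calc U * (star U * B * U) * star U
              = (U * star U) * B * (U * star U) := by simp only [Matrix.mul_assoc]
            _ = B := by rw [hUUs]; simp
  refine ⟨hsolve, ?_⟩
  -- uniqueness
  intro Y hY
  have hY' : diagonal lam * (star U * Y * U) + (star U * Y * U) * diagonal lam = B' := by
    have h1 : star U * (P * Y + Y * P) * U = star U * B * U := by rw [hY]
    calc diagonal lam * (star U * Y * U) + (star U * Y * U) * diagonal lam
        = (star U * P * U) * (star U * Y * U) + (star U * Y * U) * (star U * P * U) := by
          rw [hdiag]
      _ = star U * (P * (U * star U) * Y) * U + star U * (Y * (U * star U) * P) * U := by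
          simp only [Matrix.mul_assoc]
      _ = star U * (P * Y + Y * P) * U := by
          rw [hUUs]
          simp only [Matrix.mul_one, Matrix.one_mul, Matrix.mul_add, Matrix.add_mul,
            Matrix.mul_assoc]
      _ = B' := by rw [h1, hB'def]
  have hYM : star U * Y * U = M := by
    ext p q
    have h2 : (diagonal lam * (star U * Y * U) + (star U * Y * U) * diagonal lam) p q =
        B' p q := by rw [hY']
    simp only [Matrix.add_apply, Matrix.diagonal_mul, Matrix.mul_diagonal] at h2
    have hne : lam p + lam q ≠ 0 := (hlamsum p q).ne'
    show (star U * Y * U) p q = M p q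
    rw [hMdef]
    show (star U * Y * U) p q = B' p q / (lam p + lam q)
    rw [eq_div_iff hne]
    linarith [h2]
  calc Y = (U * star U) * Y * (U * star U) := by rw [hUUs]; simp
    _ = U * (star U * Y * U) * star U := by simp only [Matrix.mul_assoc]
    _ = U * M * star U := by rw [hYM]
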